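/- Let k ≥ 0, a ≥ 1, b ≥ 0 be integers with d = gcd(a,b), a = d·a', b = d·b'. Then for every positive integer n, g_{k,a,b}(n) = d^k · g_{k,a',b'}(n), where g_{k,a,b}(n) = (∏_{i=0}^{k}(b+(n+i)a)) / lcm(b+na, ..., b+(n+k)a). -/

import Mathlib

lemma finset_lcm_mul_left (s : Finset ℕ) (hs : s.Nonempty) (d : ℕ) (f : ℕ → ℕ) :
    s.lcm (fun i => d * f i) = d * s.lcm f := by
  induction hs using Finset.Nonempty.cons_induction with
  | singleton b => simp [Finset.lcm_singleton]
  | cons b s hb hs ih =>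
      rw [Finset.cons_eq_insert, Finset.lcm_insert, Finset.lcm_insert, ih]
      exact Nat.lcm_mul_left _ _ _

theorem stmt16 (k a b : ℕ) (ha : 1 ≤ a) (d a' b' : ℕ) (hd : d = Nat.gcd a b)
    (ha' : a = d * a') (hb' : b = d * b') (n : ℕ) (hn : 1 ≤ n) :
    (∏ i ∈ Finset.range (k+1), (b + (n + i) * a)) /
        (Finset.range (k+1)).lcm (fun i => b + (n + i) * a) =
      d ^ k * ((∏ i ∈ Finset.range (k+1), (b' + (n + i) * a')) /
        (Finset.range (k+1)).lcm (fun i => b' + (n + i) * a')) := by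
  have hdpos : 0 < d := by
    rw [hd]
    exact Nat.gcd_pos_of_pos_left b ha
  have hfun : ∀ i, b + (n + i) * a = d * (b' + (n + i) * a') := by
    intro i
    rw [ha', hb']; ring
  have hne : (Finset.range (k+1)).Nonempty := Finset.nonempty_range_iff.mpr (Nat.succ_ne_zero k)
  have hlcm : (Finset.range (k+1)).lcm (fun i => b + (n + i) * a)
      = d * (Finset.range (k+1)).lcm (fun i => b' + (n + i) * a') := by
    rw [show (fun i => b + (n + i) * a) = fun i => d * (b' + (n + i) * a') from funext hfun]
    exact finset_lcm_mul_left _ hne d _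
  have hprod : (∏ i ∈ Finset.range (k+1), (b + (n + i) * a))
      = d ^ (k+1) * ∏ i ∈ Finset.range (k+1), (b' + (n + i) * a') := by
    calc (∏ i ∈ Finset.range (k+1), (b + (n + i) * a))
        = ∏ i ∈ Finset.range (k+1), d * (b' + (n + i) * a') := by
          exact Finset.prod_congr rfl (fun i _ => hfun i)
      _ = d ^ (k+1) * ∏ i ∈ Finset.range (k+1), (b' + (n + i) * a') := by
          rw [Finset.prod_mul_distrib, Finset.prod_const, Finset.card_range]
  have hdvd : (Finset.range (k+1)).lcm (fun i => b' + (n + i) * a')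
      ∣ ∏ i ∈ Finset.range (k+1), (b' + (n + i) * a') :=
    Finset.lcm_dvd (fun i hi => Finset.dvd_prod_of_mem _ hi)
  rw [hprod, hlcm, pow_succ, mul_comm (d^k) d, mul_assoc,
    Nat.mul_div_mul_left _ _ hdpos, Nat.mul_div_assoc _ hdvd]
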